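/- Concatenating partial level bitmaps is correct: with the setup of the domain decomposition, the full level-$i$ bitmap restricted to the block for segment $t$ and node $v$ equals the portion of segment $t$'s partial level-$i$ bitmap corresponding to node $v$; formally, the level-$i$ bitmap of $S$ equals the function that, on position $\text{offset}(t,v) + r$ for $r < c_{t,v}$, returns the $r$-th bit of node $v$ in the partial wavelet tree of segment $S_t$. -/

import Mathlib

lemma aux0 {α} (p : α → Bool) : ∀ (l : List α),
    List.countP p l = (l.map fun a => if p a then 1 else 0).sum
  | [] => by simp
  | x :: xs => by
    rw [List.countP_cons, List.map_cons, List.sum_cons, aux0 p xs]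
    by_cases h : p x <;> simp [h, Nat.add_comm]

lemma aux1 {α} {n : ℕ} (f : Fin n → α) (p : α → Bool) :
    ((List.ofFn f).filter p).length = (Finset.univ.filter (fun j => p (f j))).card := by
  rw [List.ofFn_eq_map, List.filter_map, List.length_map, ← List.countP_eq_length_filter]
  rw [Finset.card_filter, Fin.sum_univ_def, aux0]
  simp [Function.comp]

lemma aux2 {α} (g : α → ℕ) (t : ℕ) : ∀ (l : List α),
    l.Pairwise (fun x y => g x ≤ g y) →
    l = l.filter (fun x => g x < t) ++ l.filter (fun x => g x = t) ++ l.filter (fun x => t < g x)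
  | [], _ => by simp
  | x :: xs, h => by
    obtain ⟨h1, h2⟩ := List.pairwise_cons.mp h
    have ih := aux2 g t xs h2
    rcases lt_trichotomy (g x) t with hx | hx | hx
    · simp only [List.filter_cons]
      rw [if_pos (by simpa using hx), if_neg (by simpa using hx.ne),
        if_neg (by simpa using not_lt.mpr hx.le)]
      simpa using congrArg (List.cons x) ih
    · have e1 : xs.filter (fun x => decide (g x < t)) = [] := by
        rw [List.filter_eq_nil_iff]
        intro y hy
        simp only [decide_eq_true_eq, not_lt]
        exact hx ▸ h1 y hy
      simp only [List.filter_cons]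
      rw [if_neg (by simp [hx]), if_pos (by simp [hx]), if_neg (by simp [hx])]
      rw [e1] at ih ⊢
      simpa using congrArg (List.cons x) (by simpa using ih)
    · have hall : ∀ y ∈ x :: xs, t < g y := by
        intro y hy
        rcases List.mem_cons.mp hy with rfl | hy
        · exact hx
        · exact lt_of_lt_of_le hx (h1 y hy)
      have e1 : (x :: xs).filter (fun x => decide (g x < t)) = [] := by
        rw [List.filter_eq_nil_iff]; intro y hy; simpa using not_lt.mpr (hall y hy).le
      have e2 : (x :: xs).filter (fun x => decide (g x = t)) = [] := by
        rw [List.filter_eq_nil_iff]; intro y hy; simpa using (hall y hy).ne'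
      have e3 : (x :: xs).filter (fun x => decide (t < g x)) = x :: xs := by
        rw [List.filter_eq_self]; intro y hy; simpa using hall y hy
      rw [e1, e2, e3]; simp

theorem stmt11 (n l i k : ℕ) (hi : i < l) (S : Fin n → Fin (2 ^ l))
    (seg : Fin n → Fin k) (hseg : Monotone seg) :
    let node : Fin n → ℕ := fun j => (S j : ℕ) >>> (l - i)
    let c : Fin k → ℕ → ℕ := fun t v =>
      (Finset.univ.filter (fun j : Fin n => seg j = t ∧ node j = v)).card
    let offset : Fin k → ℕ → ℕ := fun t v =>
      (Finset.univ.filter (fun j : Fin n => node j < v)).card +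
      (Finset.univ.filter (fun j : Fin n => node j = v ∧ seg j < t)).card
    -- full level-i bitmap: bits grouped by node, in order of position in S
    let full : List Bool :=
      ((List.range (2 ^ i)).map (fun v =>
        (((List.ofFn fun j => (S j : ℕ)).filter fun s => s >>> (l - i) == v).map
          fun s => Nat.testBit s (l - i - 1)))).flatten
    -- bits of node v in the partial wavelet tree of segment t
    let part : Fin k → ℕ → List Bool := fun t v =>
      ((List.ofFn fun j => (seg j, (S j : ℕ))).filter
          (fun x => x.1 == t && x.2 >>> (l - i) == v)).map
        fun x => Nat.testBit x.2 (l - i - 1)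
    ∀ (t : Fin k) (v : Fin (2 ^ i)) (r : ℕ), r < c t (v : ℕ) →
      full[offset t (v : ℕ) + r]? = (part t (v : ℕ))[r]? := by
  intro node c offset full part t v r hr
  set P : List (Fin k × ℕ) := List.ofFn (fun j => (seg j, (S j : ℕ))) with hP
  set bitf : Fin k × ℕ → Bool := fun x => Nat.testBit x.2 (l - i - 1) with hbitf
  -- blocks of the full bitmap
  set blk : ℕ → List Bool := fun v' =>
    (P.filter (fun x => x.2 >>> (l - i) == v')).map bitf with hblk
  have hfull : full = ((List.range (2 ^ i)).map blk).flatten := by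
    simp only [full, hblk]
    congr 1
    apply List.map_congr_left
    intro v' _
    have : (List.ofFn fun j => (S j : ℕ)) = P.map Prod.snd := by
      simp only [hP, List.map_ofFn]
      rfl
    rw [this, List.filter_map, List.map_map]
    rfl
  -- length of each block
  have hlen : ∀ v' : ℕ, (blk v').length =
      (Finset.univ.filter (fun j : Fin n => node j = v')).card := by
    intro v'
    rw [hblk]
    simp only [List.length_map, hP]
    rw [aux1]
    congr 1
    ext j
    simp [node]
  -- split the range at v
  have hv : (v : ℕ) < 2 ^ i := v.isLt
  have hsplit : List.range (2 ^ i) =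
      List.range (v : ℕ) ++ (v : ℕ) ::
        ((List.range (2 ^ i - (v : ℕ) - 1)).map (fun x => (v : ℕ) + 1 + x)) := by
    have h1 : List.range (2 ^ i) = List.range ((v : ℕ) + (2 ^ i - (v : ℕ))) := by
      congr 1; omega
    have h2 : 2 ^ i - (v : ℕ) = 1 + (2 ^ i - (v : ℕ) - 1) := by omega
    rw [h1, List.range_add, h2, List.range_add]
    simp [List.range_succ, Function.comp, Nat.add_assoc]
  -- the first part has length = #{node < v}
  have hJ1 : (((List.range (v : ℕ)).map blk).flatten).length =
      (Finset.univ.filter (fun j : Fin n => node j < (v : ℕ))).card := by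
    rw [List.length_flatten]
    have : ((List.range (v:ℕ)).map blk).map List.length
        = (List.range (v:ℕ)).map (fun v' => (Finset.univ.filter (fun j : Fin n => node j = v')).card) := by
      rw [List.map_map]; apply List.map_congr_left; intro v' _; exact hlen v'
    rw [this]
    have hsum : ((List.range (v:ℕ)).map (fun v' => (Finset.univ.filter (fun j : Fin n => node j = v')).card)).sum
        = ∑ v' ∈ Finset.range (v:ℕ), (Finset.univ.filter (fun j : Fin n => node j = v')).card := rfl
    rw [hsum]
    rw [Finset.card_eq_sum_card_fiberwise (f := node) (t := Finset.range (v:ℕ))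
      (by intro j hj; simp at hj ⊢; exact hj)]
    apply Finset.sum_congr rfl
    intro v' hv'
    simp only [Finset.mem_range] at hv'
    congr 1
    ext j
    simp only [Finset.mem_filter, Finset.mem_univ, true_and]
    omega
  -- decompose full
  rw [hfull, hsplit, List.map_append, List.flatten_append, List.map_cons, List.flatten_cons]
  rw [List.getElem?_append_right (by rw [hJ1]; simp only [offset]; omega)]
  rw [hJ1]
  have hidx : offset t (v:ℕ) + r - (Finset.univ.filter (fun j : Fin n => node j < (v:ℕ))).card
      = (Finset.univ.filter (fun j : Fin n => node j = (v:ℕ) ∧ seg j < t)).card + r := by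
    simp only [offset]; omega
  rw [hidx]
  -- now split blk v by segment
  have hpw : (P.filter (fun x => x.2 >>> (l - i) == (v:ℕ))).Pairwise
      (fun x y => (x.1 : ℕ) ≤ (y.1 : ℕ)) := by
    apply List.Pairwise.filter
    rw [hP, List.pairwise_ofFn]
    intro a b hab
    exact hseg hab.le
  have hdecomp := aux2 (fun x : Fin k × ℕ => (x.1 : ℕ)) (t : ℕ) _ hpw
  set L := P.filter (fun x => x.2 >>> (l - i) == (v:ℕ)) with hL
  set Flt := L.filter (fun x => decide ((x.1 : ℕ) < (t:ℕ))) with hFlt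
  set Feq := L.filter (fun x => decide ((x.1 : ℕ) = (t:ℕ))) with hFeq
  set Fgt := L.filter (fun x => decide ((t:ℕ) < (x.1 : ℕ))) with hFgt
  have hblkv : blk (v:ℕ) = Flt.map bitf ++ (Feq.map bitf ++ Fgt.map bitf) := by
    rw [hblk]
    show L.map bitf = _
    rw [hdecomp]
    simp [List.map_append, List.append_assoc]
  -- lengths
  have hFltlen : (Flt.map bitf).length
      = (Finset.univ.filter (fun j : Fin n => node j = (v:ℕ) ∧ seg j < t)).card := by
    rw [List.length_map, hFlt, hL, List.filter_filter, hP, aux1]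
    congr 1
    ext j
    simp only [Bool.and_eq_true, decide_eq_true_eq, beq_iff_eq, node, Fin.lt_def,
      Finset.mem_filter, Finset.mem_univ, true_and]
    exact and_comm
  have hFeqlen : (Feq.map bitf).length = c t (v:ℕ) := by
    rw [List.length_map, hFeq, hL, List.filter_filter, hP, aux1]
    simp only [c]
    congr 1
    ext j
    simp only [Bool.and_eq_true, decide_eq_true_eq, beq_iff_eq, node, Fin.val_eq_val,
      Finset.mem_filter, Finset.mem_univ, true_and]
    try exact and_comm
  rw [hblkv, List.append_assoc, List.append_assoc]
  rw [List.getElem?_append_right (by rw [hFltlen]; omega)]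
  rw [hFltlen, Nat.add_sub_cancel_left]
  rw [List.getElem?_append, if_pos (by rw [hFeqlen]; omega)]
  -- finally identify Feq.map bitf with part t v
  congr 1
  simp only [part, hFeq, hL, List.filter_filter, hP, hbitf]
  congr 1
  apply List.filter_congr
  intro x _
  by_cases h : x.1 = t <;> simp [h, Fin.val_eq_val, Bool.and_comm]
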